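/- Fix 1/2 < H < 1, t > 0 and a constant c_H > 0. Let A : [0, t] → M_m(ℝ) be continuous with A(u) an orthogonal matrix for every u. For s ∈ (0, t) define M(s) := ∫_s^t c_H s^{1/2 − H} (u − s)^{H − 3/2} u^{H − 1/2} A(u) du, and set Γ := ∫_0^t M(s)ᵀ M(s) ds (all integrals being absolutely convergent). Then Γ is positive definite: for every nonzero x ∈ ℝ^m, xᵀ Γ x > 0; in particular Γ is invertible. -/

import Mathlib

open scoped Matrix

attribute [local instance] Matrix.normedAddCommGroup Matrix.normedSpace

open MeasureTheory Set intervalIntegral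

local instance instPMMat {m : ℕ} : TopologicalSpace.PseudoMetrizableSpace (Matrix (Fin m) (Fin m) ℝ) :=
  inferInstanceAs (TopologicalSpace.PseudoMetrizableSpace (Fin m → Fin m → ℝ))

noncomputable local instance instENMat {m : ℕ} : ENormedAddCommMonoid (Matrix (Fin m) (Fin m) ℝ) :=
  inferInstanceAs (ENormedAddCommMonoid (Fin m → Fin m → ℝ))

section Aux

variable {m : ℕ}

noncomputable def quadCLM (x y : Fin m → ℝ) :
    Matrix (Fin m) (Fin m) ℝ →L[ℝ] ℝ :=
  LinearMap.toContinuousLinearMap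
    { toFun := fun B => x ⬝ᵥ B.mulVec y
      map_add' := fun B C => by
        simp [Matrix.add_mulVec, dotProduct_add]
      map_smul' := fun c B => by
        simp [Matrix.smul_mulVec, dotProduct_smul, smul_eq_mul] }

@[simp] lemma quadCLM_apply (x y : Fin m → ℝ) (B : Matrix (Fin m) (Fin m) ℝ) :
    quadCLM x y B = x ⬝ᵥ B.mulVec y := rfl

lemma dotProduct_self_pos {x : Fin m → ℝ} (hx : x ≠ 0) : 0 < x ⬝ᵥ x := by
  obtain ⟨i, hi⟩ := Function.ne_iff.1 hx
  exact Finset.sum_pos' (fun j _ => mul_self_nonneg _)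
    ⟨i, Finset.mem_univ _, mul_self_pos.2 hi⟩

lemma dotProduct_self_nonneg' (v : Fin m → ℝ) : 0 ≤ v ⬝ᵥ v :=
  Finset.sum_nonneg fun j _ => mul_self_nonneg _

lemma quad_transpose_mul (B : Matrix (Fin m) (Fin m) ℝ) (x : Fin m → ℝ) :
    x ⬝ᵥ (Bᵀ * B).mulVec x = (B.mulVec x) ⬝ᵥ (B.mulVec x) := by
  rw [← Matrix.mulVec_mulVec, Matrix.dotProduct_mulVec, Matrix.vecMul_transpose]

lemma norm_transpose_mul_self_le (B : Matrix (Fin m) (Fin m) ℝ) :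
    ‖Bᵀ * B‖ ≤ m * ‖B‖ ^ 2 := by
  refine (Matrix.norm_le_iff (by positivity)).2 fun i j => ?_
  calc ‖(Bᵀ * B) i j‖ = |∑ k, B k i * B k j| := by
        simp [Matrix.mul_apply, Matrix.transpose_apply]
  _ ≤ ∑ k, |B k i * B k j| := Finset.abs_sum_le_sum_abs _ _
  _ ≤ ∑ _k : Fin m, ‖B‖ * ‖B‖ := by
        refine Finset.sum_le_sum fun k _ => ?_
        rw [abs_mul]
        exact mul_le_mul (B.norm_entry_le_entrywise_sup_norm)
          (B.norm_entry_le_entrywise_sup_norm) (abs_nonneg _) (norm_nonneg _)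
  _ = m * ‖B‖ ^ 2 := by simp [sq, Finset.sum_const, Finset.card_univ]

end Aux

/-- **Positive definiteness of the Malliavin matrix of fractional Brownian motion on a compact
Lie group (`1/2 < H < 1`).** With `A u` orthogonal for `u ∈ [0,t]` (playing the role of
`Ad_{X_u}`), `M s = ∫ₛᵗ c_H s^{1/2−H} (u−s)^{H−3/2} u^{H−1/2} A u du` and
`Γ = ∫₀ᵗ (M s)ᵀ M s ds`, the matrix `Γ` is positive definite, in particular invertible. -/
theorem malliavin_matrix_pos_def {m : ℕ}
    (H : ℝ) (hH1 : 1 / 2 < H) (hH2 : H < 1)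
    (t : ℝ) (ht : 0 < t) (cH : ℝ) (hcH : 0 < cH)
    (A : ℝ → Matrix (Fin m) (Fin m) ℝ)
    (hAc : ContinuousOn A (Set.Icc 0 t))
    (hAorth : ∀ u ∈ Set.Icc (0 : ℝ) t, (A u)ᵀ * A u = 1)
    (M : ℝ → Matrix (Fin m) (Fin m) ℝ)
    (hM : ∀ s ∈ Set.Ioo (0 : ℝ) t,
      M s = ∫ u in s..t,
        (cH * s ^ ((1 : ℝ) / 2 - H) * (u - s) ^ (H - 3 / 2) * u ^ (H - 1 / 2)) • A u)
    (Γ : Matrix (Fin m) (Fin m) ℝ)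
    (hΓ : Γ = ∫ s in (0 : ℝ)..t, (M s)ᵀ * M s) :
    (∀ x : Fin m → ℝ, x ≠ 0 → 0 < x ⬝ᵥ Γ.mulVec x) ∧ IsUnit Γ := by
  have hH12 : (0:ℝ) < H - 1/2 := by linarith
  have hr : (-1:ℝ) < H - 3/2 := by linarith
  obtain ⟨C0, hC0⟩ := IsCompact.exists_bound_of_continuousOn isCompact_Icc hAc
  set CA : ℝ := max C0 0 with hCAdef
  have hCA0 : 0 ≤ CA := le_max_right _ _
  have hCAb : ∀ u ∈ Icc (0:ℝ) t, ‖A u‖ ≤ CA := fun u hu => (hC0 u hu).trans (le_max_left _ _)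
  set κ : ℝ → ℝ → ℝ :=
    fun s u => cH * s ^ ((1:ℝ)/2 - H) * (u - s) ^ (H - 3/2) * u ^ (H - 1/2) with hκdef
  set g : ℝ → Matrix (Fin m) (Fin m) ℝ := fun s => ∫ u in s..t, κ s u • A u with hgdef
  have hMg : ∀ s ∈ Ioo (0:ℝ) t, M s = g s := fun s hs => hM s hs
  -- Step 1: interval integrability of the kernel
  have hshift : ∀ s : ℝ, IntervalIntegrable (fun u => (u - s) ^ (H - 3/2)) volume s t := by
    intro s
    have h0 := intervalIntegrable_rpow' (a := 0) (b := t - s) hr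
    simpa using h0.comp_sub_right s
  have hκint : ∀ s ∈ Ioo (0:ℝ) t, IntervalIntegrable (κ s) volume s t := by
    intro s hs
    have hcont : ContinuousOn (fun u : ℝ => u ^ (H - 1/2)) (uIcc s t) := by
      intro u hu
      rw [uIcc_of_le hs.2.le] at hu
      exact (Real.continuousAt_rpow_const u _
        (Or.inl (ne_of_gt (lt_of_lt_of_le hs.1 hu.1)))).continuousWithinAt
    have h2 := ((hshift s).mul_continuousOn hcont).const_mul (cH * s ^ ((1:ℝ)/2 - H))
    have he : (fun u => cH * s ^ ((1:ℝ)/2 - H) * ((u - s) ^ (H - 3/2) * u ^ (H - 1/2))) = κ s := by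
      funext u; simp only [hκdef]; ring
    rwa [he] at h2
  have hAmem : ∀ s ∈ Ioo (0:ℝ) t, MemLp A ⊤ (volume.restrict (Ioc s t)) := by
    intro s hs
    have hsub : Ioc s t ⊆ Icc 0 t := fun u hu => ⟨(hs.1.trans hu.1).le, hu.2⟩
    have hmeas : AEStronglyMeasurable A (volume.restrict (Ioc s t)) :=
      (hAc.aestronglyMeasurable measurableSet_Icc).mono_measure
        (Measure.restrict_mono hsub le_rfl)
    refine memLp_top_of_bound hmeas CA ?_
    filter_upwards [ae_restrict_mem measurableSet_Ioc] with u hu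
    exact hCAb u (hsub hu)
  have hFi : ∀ s ∈ Ioo (0:ℝ) t, IntervalIntegrable (fun u => κ s u • A u) volume s t := by
    intro s hs
    rw [intervalIntegrable_iff_integrableOn_Ioc_of_le hs.2.le]
    exact ((intervalIntegrable_iff_integrableOn_Ioc_of_le hs.2.le).1
      (hκint s hs)).smul_of_top_left (hAmem s hs)
  -- value of the singular integral
  have hval : ∀ s : ℝ, 0 ≤ s → s < t →
      (∫ u in s..t, (u - s) ^ (H - 3/2)) = (t - s) ^ (H - 1/2) / (H - 1/2) := by
    intro s hs0 hst
    have h1 : (∫ u in s..t, (u - s) ^ (H - 3/2)) = ∫ v in (0:ℝ)..(t - s), v ^ (H - 3/2) := by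
      have := intervalIntegral.integral_comp_sub_right (a := s) (b := t)
        (fun v => v ^ (H - 3/2)) s
      simpa [sub_self] using this
    rw [h1, integral_rpow (Or.inl hr)]
    have he : H - 3/2 + 1 = H - 1/2 := by ring
    rw [he, Real.zero_rpow (ne_of_gt hH12), sub_zero]
  -- Step 2: norm bound for g
  set K : ℝ := cH * t ^ (H - 1/2) * CA * (t ^ (H - 1/2) / (H - 1/2)) with hKdef
  have hK0 : 0 ≤ K := by positivity
  have hκnn : ∀ s ∈ Ioo (0:ℝ) t, ∀ u ∈ Icc s t, 0 ≤ κ s u := by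
    intro s hs u hu
    have h1 : (0:ℝ) ≤ s := hs.1.le
    have h2 : (0:ℝ) ≤ u - s := sub_nonneg.2 hu.1
    have h3 : (0:ℝ) ≤ u := h1.trans hu.1
    simp only [hκdef]
    positivity
  have hgb : ∀ s ∈ Ioc (0:ℝ) t, ‖g s‖ ≤ K * s ^ ((1:ℝ)/2 - H) := by
    intro s hs
    rcases eq_or_lt_of_le hs.2 with heq | hst
    · have : g s = 0 := by
        rw [hgdef]; simp only; rw [heq, intervalIntegral.integral_same]
      rw [this, norm_zero]
      have : (0:ℝ) < s := hs.1
      positivity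
    · have hs' : s ∈ Ioo (0:ℝ) t := ⟨hs.1, hst⟩
      set D : ℝ := cH * s ^ ((1:ℝ)/2 - H) * t ^ (H - 1/2) * CA with hDdef
      have hD0 : 0 ≤ D := by
        have : (0:ℝ) < s := hs.1
        positivity
      have h2 : ∀ u ∈ Icc s t, ‖κ s u • A u‖ ≤ D * (u - s) ^ (H - 3/2) := by
        intro u hu
        have hu0 : (0:ℝ) ≤ u := hs.1.le.trans hu.1
        have hus : (0:ℝ) ≤ u - s := sub_nonneg.2 hu.1
        rw [norm_smul, Real.norm_eq_abs, abs_of_nonneg (hκnn s hs' u hu)]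
        have hb1 : u ^ (H - 1/2) ≤ t ^ (H - 1/2) :=
          Real.rpow_le_rpow hu0 hu.2 hH12.le
        have hb2 : ‖A u‖ ≤ CA := hCAb u ⟨hu0, hu.2⟩
        have hchain : κ s u * ‖A u‖ ≤
            cH * s ^ ((1:ℝ)/2 - H) * (u - s) ^ (H - 3/2) * (t ^ (H - 1/2) * CA) := by
          have he : κ s u * ‖A u‖ =
              cH * s ^ ((1:ℝ)/2 - H) * (u - s) ^ (H - 3/2) * (u ^ (H - 1/2) * ‖A u‖) := by
            simp only [hκdef]; ring
          rw [he]
          have hs0 : (0:ℝ) < s := hs.1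
          have hle : u ^ (H - 1/2) * ‖A u‖ ≤ t ^ (H - 1/2) * CA :=
            mul_le_mul hb1 hb2 (norm_nonneg _) (by positivity)
          exact mul_le_mul_of_nonneg_left hle (by positivity)
        refine hchain.trans (le_of_eq ?_)
        rw [hDdef]; ring
      calc ‖g s‖ ≤ ∫ u in s..t, ‖κ s u • A u‖ := by
            rw [hgdef]
            exact intervalIntegral.norm_integral_le_integral_norm hst.le
      _ ≤ ∫ u in s..t, D * (u - s) ^ (H - 3/2) :=
            intervalIntegral.integral_mono_on hst.le ((hFi s hs').norm)
              ((hshift s).const_mul D) h2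
      _ = D * ((t - s) ^ (H - 1/2) / (H - 1/2)) := by
            rw [intervalIntegral.integral_const_mul, hval s hs.1.le hst]
      _ ≤ D * (t ^ (H - 1/2) / (H - 1/2)) := by
            have hb : (t - s) ^ (H - 1/2) ≤ t ^ (H - 1/2) :=
              Real.rpow_le_rpow (by linarith [hs.2]) (by linarith [hs.1]) hH12.le
            gcongr
      _ = K * s ^ ((1:ℝ)/2 - H) := by simp only [hKdef, hDdef]; ring
    -- Step 3: measurability and integrability of G
  set G : ℝ → Matrix (Fin m) (Fin m) ℝ := fun s => (g s)ᵀ * g s with hGdef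
  have hgmeas : AEStronglyMeasurable g (volume.restrict (Ioc 0 t)) := by
    set Ψ : ℝ × ℝ → Matrix (Fin m) (Fin m) ℝ :=
      fun q => Set.indicator {q : ℝ × ℝ | q.1 < q.2} (fun q => κ q.1 q.2 • A q.2) q with hΨdef
    have hmeasS : MeasurableSet {q : ℝ × ℝ | q.1 < q.2} :=
      measurableSet_lt measurable_fst measurable_snd
    have hκm : Measurable fun q : ℝ × ℝ => κ q.1 q.2 := by
      simp only [hκdef]
      exact ((measurable_const.mul (measurable_fst.pow measurable_const)).mul
        ((measurable_snd.sub measurable_fst).pow measurable_const)).mul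
        (measurable_snd.pow measurable_const)
    have hA2 : AEStronglyMeasurable (fun q : ℝ × ℝ => A q.2)
        ((volume.restrict (Ioc (0:ℝ) t)).prod (volume.restrict (Ioc (0:ℝ) t))) := by
      have hc : ContinuousOn (fun q : ℝ × ℝ => A q.2) (univ ×ˢ Icc 0 t) :=
        hAc.comp continuous_snd.continuousOn (fun q hq => hq.2)
      have h1 := hc.aestronglyMeasurable (μ := (volume : Measure ℝ).prod volume)
        (MeasurableSet.univ.prod measurableSet_Icc)
      rw [Measure.prod_restrict]
      exact h1.mono_measure
        (Measure.restrict_mono (prod_mono (subset_univ _) Ioc_subset_Icc_self) le_rfl)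
    have hΨm : AEStronglyMeasurable Ψ
        ((volume.restrict (Ioc (0:ℝ) t)).prod (volume.restrict (Ioc (0:ℝ) t))) :=
      (hκm.aestronglyMeasurable.smul hA2).indicator hmeasS
    have h1 : AEStronglyMeasurable (fun s => ∫ u, Ψ (s, u) ∂(volume.restrict (Ioc (0:ℝ) t)))
        (volume.restrict (Ioc (0:ℝ) t)) := hΨm.integral_prod_right'
    refine h1.congr ?_
    filter_upwards [ae_restrict_mem measurableSet_Ioc] with s hs
    have hind : ∀ u : ℝ, Ψ (s, u) = Set.indicator (Ioi s) (fun u => κ s u • A u) u := by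
      intro u
      by_cases h : s < u <;> simp [hΨdef, Set.indicator, h]
    have hset : Ioi s ∩ Ioc 0 t = Ioc s t := by
      ext u
      simp only [mem_inter_iff, mem_Ioi, mem_Ioc]
      exact ⟨fun ⟨h1', _, h3⟩ => ⟨h1', h3⟩, fun ⟨h1', h2'⟩ => ⟨h1', hs.1.trans h1', h2'⟩⟩
    calc (∫ u, Ψ (s, u) ∂(volume.restrict (Ioc (0:ℝ) t)))
        = ∫ u, Set.indicator (Ioi s) (fun u => κ s u • A u) u
            ∂(volume.restrict (Ioc (0:ℝ) t)) := by simp_rw [hind]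
      _ = ∫ u in Ioi s, κ s u • A u ∂(volume.restrict (Ioc (0:ℝ) t)) :=
            integral_indicator measurableSet_Ioi
      _ = ∫ u in Ioc s t, κ s u • A u := by
            rw [Measure.restrict_restrict measurableSet_Ioi, hset]
      _ = g s := (intervalIntegral.integral_of_le hs.2).symm
  have hGmeas : AEStronglyMeasurable G (volume.restrict (Ioc 0 t)) := by
    have hco : Continuous fun B : Matrix (Fin m) (Fin m) ℝ => Bᵀ * B :=
      (continuous_id.matrix_transpose).matrix_mul continuous_id
    exact hco.comp_aestronglyMeasurable hgmeas
  have hGileq : IntegrableOn G (Ioc 0 t) volume := by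
    have hmaj : IntegrableOn (fun s : ℝ => ((m:ℝ) * K ^ 2) * s ^ (1 - 2*H)) (Ioc 0 t) volume := by
      have h1 := (intervalIntegrable_rpow' (a := 0) (b := t)
        (show (-1:ℝ) < 1 - 2*H by linarith)).const_mul ((m:ℝ) * K ^ 2)
      exact (intervalIntegrable_iff_integrableOn_Ioc_of_le ht.le).1 h1
    refine Integrable.mono' hmaj hGmeas ?_
    filter_upwards [ae_restrict_mem measurableSet_Ioc] with s hs
    have h1 : ‖G s‖ ≤ m * ‖g s‖ ^ 2 := norm_transpose_mul_self_le (g s)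
    have h2 : ‖g s‖ ≤ K * s ^ ((1:ℝ)/2 - H) := hgb s hs
    have h3 : (s:ℝ) ^ ((1:ℝ)/2 - H) * s ^ ((1:ℝ)/2 - H) = s ^ (1 - 2*H) := by
      rw [← Real.rpow_add hs.1]
      norm_num
      ring_nf
    calc ‖G s‖ ≤ (m:ℝ) * ‖g s‖ ^ 2 := h1
    _ ≤ (m:ℝ) * (K * s ^ ((1:ℝ)/2 - H)) ^ 2 := by
        have := norm_nonneg (g s)
        gcongr
    _ = ((m:ℝ) * K ^ 2) * (s ^ ((1:ℝ)/2 - H) * s ^ ((1:ℝ)/2 - H)) := by ring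
    _ = ((m:ℝ) * K ^ 2) * s ^ (1 - 2*H) := by rw [h3]
  have hGint : IntervalIntegrable G volume 0 t :=
    (intervalIntegrable_iff_integrableOn_Ioc_of_le ht.le).2 hGileq
  -- Step 4: Γ as integral of G
  have hΓ2 : Γ = ∫ s in (0:ℝ)..t, G s := by
    rw [hΓ]
    apply intervalIntegral.integral_congr_ae
    have hne : ∀ᵐ s : ℝ, s ≠ t := by
      rw [ae_iff]
      simpa [not_not, Set.setOf_eq_eq_singleton] using measure_singleton t
    filter_upwards [hne] with s hsne hsmem
    rw [uIoc_of_le ht.le] at hsmem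
    have hs' : s ∈ Ioo (0:ℝ) t := ⟨hsmem.1, lt_of_le_of_ne hsmem.2 hsne⟩
    rw [hMg s hs']
    -- key positivity
  have key : ∀ x : Fin m → ℝ, x ≠ 0 → 0 < x ⬝ᵥ Γ.mulVec x := by
    intro x hx
    set w : Fin m → ℝ := (A t).mulVec x with hwdef
    have htmem : t ∈ Icc (0:ℝ) t := right_mem_Icc.2 ht.le
    have hwne : w ≠ 0 := by
      intro h0
      have h1 : (A t)ᵀ.mulVec w = x := by
        rw [hwdef, Matrix.mulVec_mulVec, hAorth t htmem, Matrix.one_mulVec]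
      rw [h0, Matrix.mulVec_zero] at h1
      exact hx h1.symm
    set ψ : ℝ → ℝ := fun u => w ⬝ᵥ (A u).mulVec x with hψdef
    have hψc : ContinuousOn ψ (Icc 0 t) :=
      (quadCLM w x).continuous.comp_continuousOn hAc
    have hψt : 0 < ψ t := by
      have : ψ t = w ⬝ᵥ w := rfl
      rw [this]
      exact dotProduct_self_pos hwne
    -- find a threshold a
    have hct : ContinuousWithinAt ψ (Icc 0 t) t := hψc t htmem
    have hev : ∀ᶠ u in nhdsWithin t (Icc 0 t), 0 < ψ u :=
      hct.eventually (eventually_gt_nhds hψt)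
    rw [Filter.eventually_iff, mem_nhdsWithin] at hev
    obtain ⟨U, hUo, htU, hUsub⟩ := hev
    obtain ⟨δ, hδ, hball⟩ := Metric.isOpen_iff.1 hUo t htU
    set a : ℝ := max (t - δ/2) (t/2) with hadef
    have ha0 : 0 < a := lt_of_lt_of_le (half_pos ht) (le_max_right _ _)
    have hat : a < t := max_lt (by linarith) (by linarith)
    have hψpos : ∀ u ∈ Icc a t, 0 < ψ u := by
      intro u hu
      have hta : t - δ/2 ≤ a := le_max_left _ _
      have h1 : u ∈ U := by
        apply hball
        rw [Metric.mem_ball, Real.dist_eq, abs_of_nonpos (by linarith [hu.2])]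
        have := hu.1
        linarith
      exact hUsub ⟨h1, ha0.le.trans hu.1, hu.2⟩
    -- positivity of the quadratic form integrand on (a, t)
    have hΦpos : ∀ s ∈ Ioo a t, 0 < x ⬝ᵥ (G s).mulVec x := by
      intro s hsm
      have hs' : s ∈ Ioo (0:ℝ) t := ⟨ha0.trans hsm.1, hsm.2⟩
      have hcomm : (quadCLM w x) (g s) = ∫ u in s..t, (quadCLM w x) (κ s u • A u) :=
        ((quadCLM w x).intervalIntegral_comp_comm (hFi s hs')).symm
      have hL2 : ∀ u : ℝ, (quadCLM w x) (κ s u • A u) = κ s u * ψ u := by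
        intro u
        simp [hψdef, Matrix.smul_mulVec, dotProduct_smul, smul_eq_mul]
      have hint : IntervalIntegrable (fun u => κ s u * ψ u) volume s t := by
        have h1 : IntervalIntegrable (fun u => (quadCLM w x) (κ s u • A u)) volume s t := by
          have h0 := intervalIntegrable_iff.1 (hFi s hs')
          rw [intervalIntegrable_iff]
          exact (quadCLM w x).integrable_comp h0
        simpa only [hL2] using h1
      have hpos : 0 < ∫ u in s..t, κ s u * ψ u := by
        refine intervalIntegral_pos_of_pos_on hint ?_ hs'.2
        intro u hu
        have hκpos : 0 < κ s u := by
          have h1 : (0:ℝ) < s := hs'.1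
          have h2 : (0:ℝ) < u - s := sub_pos.2 hu.1
          have h3 : (0:ℝ) < u := h1.trans hu.1
          simp only [hκdef]
          positivity
        exact mul_pos hκpos (hψpos u ⟨hsm.1.le.trans hu.1.le, hu.2.le⟩)
      have hwpos : 0 < w ⬝ᵥ (g s).mulVec x := by
        have h2 : (∫ u in s..t, κ s u * ψ u) = w ⬝ᵥ (g s).mulVec x := by
          rw [← quadCLM_apply w x (g s), hcomm]
          simp_rw [hL2]
        rw [← h2]
        exact hpos
      have hne : (g s).mulVec x ≠ 0 := by
        intro h0
        rw [h0, dotProduct_zero] at hwpos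
        exact lt_irrefl 0 hwpos
      have h2 := dotProduct_self_pos hne
      have h3 : x ⬝ᵥ (G s).mulVec x = ((g s).mulVec x) ⬝ᵥ ((g s).mulVec x) :=
        quad_transpose_mul (g s) x
      rw [h3]
      exact h2
    -- assemble
    have hΦnn : ∀ s : ℝ, 0 ≤ x ⬝ᵥ (G s).mulVec x := by
      intro s
      rw [quad_transpose_mul (g s) x]
      exact dotProduct_self_nonneg' _
    have hΦint : IntervalIntegrable (fun s => x ⬝ᵥ (G s).mulVec x) volume 0 t := by
      have h1 : IntervalIntegrable (fun s => (quadCLM x x) (G s)) volume 0 t := by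
        rw [intervalIntegrable_iff] at hGint ⊢
        exact (quadCLM x x).integrable_comp hGint
      simpa only [quadCLM_apply] using h1
    have hsub1 : uIcc (0:ℝ) a ⊆ uIcc (0:ℝ) t := by
      rw [uIcc_of_le ha0.le, uIcc_of_le ht.le]
      exact Icc_subset_Icc le_rfl hat.le
    have hsub2 : uIcc a t ⊆ uIcc (0:ℝ) t := by
      rw [uIcc_of_le hat.le, uIcc_of_le ht.le]
      exact Icc_subset_Icc ha0.le le_rfl
    have hint1 := hΦint.mono_set hsub1
    have hint2 := hΦint.mono_set hsub2
    have hsplit := intervalIntegral.integral_add_adjacent_intervals hint1 hint2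
    have hnn1 : 0 ≤ ∫ s in (0:ℝ)..a, x ⬝ᵥ (G s).mulVec x :=
      intervalIntegral.integral_nonneg ha0.le (fun s _ => hΦnn s)
    have hpos2 : 0 < ∫ s in a..t, x ⬝ᵥ (G s).mulVec x :=
      intervalIntegral_pos_of_pos_on hint2 hΦpos hat
    have hxx : x ⬝ᵥ Γ.mulVec x = ∫ s in (0:ℝ)..t, x ⬝ᵥ (G s).mulVec x := by
      rw [hΓ2, ← quadCLM_apply x x]
      exact ((quadCLM x x).intervalIntegral_comp_comm hGint).symm
    rw [hxx, ← hsplit]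
    linarith
  refine ⟨key, ?_⟩
  rw [Matrix.isUnit_iff_isUnit_det, isUnit_iff_ne_zero]
  intro hdet
  obtain ⟨v, hv0, hv⟩ := Matrix.exists_mulVec_eq_zero_iff.2 hdet
  have hk := key v hv0
  rw [hv, dotProduct_zero] at hk
  exact lt_irrefl 0 hk
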